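/- arXiv:2604.11480 — 4 statements merged into one kernel-verified Lean document; each statement's English description precedes it below -/
import Mathlib

section
/- Let G = (V, E) be a finite directed graph with adjacency matrix M over ℚ, let n = |V|, and let v, v' ∈ V. If for all i with 1 ≤ i ≤ 2n - 1 the column sums of M^i at v and at v' agree, then they agree for all i ≥ 1; equivalently, the number of walks of each length ending in v equals the number of walks of that length ending in v'. -/
theorem stmt5 {V : Type*} [Fintype V] [DecidableEq V]
    (E : V → V → Prop) [DecidableRel E]
    (M : Matrix V V ℚ) (hM : ∀ u w, M u w = if E u w then 1 else 0)
    (v v' : V)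
    (h : ∀ i : ℕ, 1 ≤ i → i ≤ 2 * Fintype.card V - 1 →
      ∑ u : V, (M ^ i) u v = ∑ u : V, (M ^ i) u v') :
    ∀ i : ℕ, 1 ≤ i → ∑ u : V, (M ^ i) u v = ∑ u : V, (M ^ i) u v' := by
  classical
  set n := Fintype.card V with hn
  rcases Nat.eq_zero_or_pos n with h0 | hpos
  · have hV : IsEmpty V := Fintype.card_eq_zero_iff.mp h0
    intro i _
    simp
  set c : ℕ → ℚ := fun j => M.charpoly.coeff j with hc
  have hdeg : M.charpoly.natDegree = n := Matrix.charpoly_natDegree_eq_dim M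
  have hmonic : c n = 1 := by
    have hm := Matrix.charpoly_monic M
    rw [Polynomial.Monic, Polynomial.leadingCoeff, hdeg] at hm
    exact hm
  have hsum : (0 : Matrix V V ℚ) = ∑ j ∈ Finset.range (n + 1), c j • M ^ j := by
    rw [← Matrix.aeval_self_charpoly M, Polynomial.aeval_eq_sum_range, hdeg]
  have hMn : M ^ n = -∑ j ∈ Finset.range n, c j • M ^ j := by
    rw [Finset.sum_range_succ, hmonic, one_smul] at hsum
    exact eq_neg_of_add_eq_zero_right hsum.symm
  have key : ∀ k, ∀ w : V, ∑ u : V, (M ^ (k + n)) u w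
      = ∑ j ∈ Finset.range n, (-(c j)) * ∑ u : V, (M ^ (k + j)) u w := by
    intro k w
    have hmat : M ^ (k + n) = ∑ j ∈ Finset.range n, (-(c j)) • M ^ (k + j) := by
      rw [pow_add, hMn, Matrix.mul_neg, Finset.mul_sum, ← Finset.sum_neg_distrib]
      refine Finset.sum_congr rfl fun j _ => ?_
      rw [Matrix.mul_smul, ← pow_add, neg_smul]
    rw [hmat]
    simp only [Matrix.sum_apply, Matrix.smul_apply, smul_eq_mul]
    rw [Finset.sum_comm]
    simp [Finset.mul_sum]
  have main : ∀ i : ℕ, 1 ≤ i →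
      ∑ u : V, (M ^ i) u v - ∑ u : V, (M ^ i) u v' = 0 := by
    intro i
    induction i using Nat.strong_induction_on with
    | _ i IH =>
      intro hi
      by_cases hcase : i ≤ 2 * n - 1
      · rw [h i hi hcase, sub_self]
      · push_neg at hcase
        have hin : n ≤ i - n := by omega
        have hieq : i = (i - n) + n := by omega
        rw [hieq, key (i - n) v, key (i - n) v', ← Finset.sum_sub_distrib]
        refine Finset.sum_eq_zero fun j hj => ?_
        have hj' := Finset.mem_range.mp hj
        have h1 : 1 ≤ i - n + j := by omega
        have h2 : i - n + j < i := by omega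
        rw [← mul_sub, IH _ h2 h1, mul_zero]
  intro i hi
  have := main i hi
  linarith
end

section
/- Let α₁ ∈ ℚ^{1×n₁}, M₁ ∈ ℚ^{n₁×n₁}, η₁ ∈ ℚ^{n₁×1} and α₂ ∈ ℚ^{1×n₂}, M₂ ∈ ℚ^{n₂×n₂}, η₂ ∈ ℚ^{n₂×1}. If α₁ · M₁^i · η₁ = α₂ · M₂^i · η₂ for all i with 0 ≤ i ≤ n₁ + n₂ - 1, then α₁ · M₁^i · η₁ = α₂ · M₂^i · η₂ for all i ∈ ℕ₀. -/
open Matrix Polynomial Finset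

lemma key_aux {m : Type*} [Fintype m] [DecidableEq m]
    (M : Matrix m m ℚ) (u : Matrix (Fin 1) m ℚ) (v : Matrix m (Fin 1) ℚ)
    (h : ∀ i < Fintype.card m, u * M ^ i * v = 0) :
    ∀ i, u * M ^ i * v = 0 := by
  set n := Fintype.card m with hn
  have hdeg : M.charpoly.natDegree = n := M.charpoly_natDegree_eq_dim
  have hM : M ^ n = -∑ k ∈ Finset.range n, (M.charpoly.coeff k) • M ^ k := by
    have h0 := M.aeval_self_charpoly
    have hs := M.charpoly_monic.as_sum
    rw [hdeg] at hs
    rw [hs] at h0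
    simp only [map_add, map_sum, _root_.map_mul, Polynomial.aeval_X_pow,
      Polynomial.aeval_C, Algebra.smul_def] at h0 ⊢
    exact eq_neg_of_add_eq_zero_left h0
  intro i
  induction i using Nat.strong_induction_on with
  | _ i ih =>
    by_cases hi : i < n
    · exact h i hi
    · have hin : i = (i - n) + n := by omega
      rw [hin, pow_add, hM]
      have e1 : u * (M ^ (i - n) * -∑ k ∈ Finset.range n, M.charpoly.coeff k • M ^ k) * v
          = -∑ k ∈ Finset.range n, M.charpoly.coeff k • (u * M ^ (i - n + k) * v) := by
        rw [mul_neg, Matrix.mul_neg, Matrix.neg_mul, neg_inj, Finset.mul_sum,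
          Matrix.mul_sum, Matrix.sum_mul]
        refine Finset.sum_congr rfl fun k _ => ?_
        rw [mul_smul_comm, Matrix.mul_smul, Matrix.smul_mul, pow_add]
      rw [e1]
      have e2 : ∀ k ∈ Finset.range n, M.charpoly.coeff k • (u * M ^ (i - n + k) * v)
          = (0 : Matrix (Fin 1) (Fin 1) ℚ) := by
        intro k hk
        rw [Finset.mem_range] at hk
        rw [ih (i - n + k) (by omega), smul_zero]
      rw [Finset.sum_congr rfl e2]
      simp

theorem stmt8 (n₁ n₂ : ℕ)
    (α₁ : Matrix (Fin 1) (Fin n₁) ℚ) (M₁ : Matrix (Fin n₁) (Fin n₁) ℚ)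
    (η₁ : Matrix (Fin n₁) (Fin 1) ℚ)
    (α₂ : Matrix (Fin 1) (Fin n₂) ℚ) (M₂ : Matrix (Fin n₂) (Fin n₂) ℚ)
    (η₂ : Matrix (Fin n₂) (Fin 1) ℚ)
    (h : ∀ i : ℕ, i ≤ n₁ + n₂ - 1 → α₁ * M₁ ^ i * η₁ = α₂ * M₂ ^ i * η₂) :
    ∀ i : ℕ, α₁ * M₁ ^ i * η₁ = α₂ * M₂ ^ i * η₂ := by
  set M : Matrix (Fin n₁ ⊕ Fin n₂) (Fin n₁ ⊕ Fin n₂) ℚ := Matrix.fromBlocks M₁ 0 0 M₂ with hMdef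
  set u : Matrix (Fin 1) (Fin n₁ ⊕ Fin n₂) ℚ := Matrix.fromCols α₁ (-α₂) with hudef
  set v : Matrix (Fin n₁ ⊕ Fin n₂) (Fin 1) ℚ := Matrix.fromRows η₁ η₂ with hvdef
  have hpow : ∀ i : ℕ, M ^ i = Matrix.fromBlocks (M₁ ^ i) 0 0 (M₂ ^ i) := by
    intro i
    induction i with
    | zero => simp [Matrix.fromBlocks_one]
    | succ k ihk =>
      rw [pow_succ, pow_succ, pow_succ, ihk, hMdef, Matrix.fromBlocks_multiply]
      simp
  have huMv : ∀ i : ℕ, u * M ^ i * v = α₁ * M₁ ^ i * η₁ - α₂ * M₂ ^ i * η₂ := by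
    intro i
    rw [hpow i, hudef, hvdef, Matrix.fromCols_mul_fromBlocks,
      Matrix.fromCols_mul_fromRows]
    simp [mul_assoc, sub_eq_add_neg]
  have hcard : Fintype.card (Fin n₁ ⊕ Fin n₂) = n₁ + n₂ := by simp
  have hz : ∀ i, u * M ^ i * v = 0 := by
    apply key_aux
    intro i hi
    rw [hcard] at hi
    rw [huMv, sub_eq_zero]
    exact h i (by omega)
  intro i
  have := hz i
  rw [huMv, sub_eq_zero] at this
  exact this
end

section
/- Let F = (A, R) be a finite AAF with arguments a, b. If a ≄^dbs_F b (the discussion counts of a and b differ), then there exists i with 1 ≤ i ≤ 2|A| − 1 such that Dis_i(a) ≠ Dis_i(b). -/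
/-- The number of walks of length `i` ending in `v`: tuples `(z_1, …, z_i, v)`
with all consecutive pairs edges of `E` (the attack relation). -/
def walkCount {V : Type*} [Fintype V] [DecidableEq V]
    (E : V → V → Prop) [DecidableRel E] (i : ℕ) (v : V) : ℕ :=
  Fintype.card {f : Fin (i + 1) → V //
    (∀ j : Fin i, E (f j.castSucc) (f j.succ)) ∧ f (Fin.last i) = v}

/-- The discussion count `Dis_i(x)`. -/
def Dis {V : Type*} [Fintype V] [DecidableEq V]
    (E : V → V → Prop) [DecidableRel E] (i : ℕ) (x : V) : ℤ :=
  if Odd i then -(walkCount E i x : ℤ) else (walkCount E i x : ℤ)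

/-- `a ⪰^dbs b`: the sequence `(Dis_i(a))_{i ≥ 1}` is lexicographically ≥ `(Dis_i(b))_{i ≥ 1}`. -/
def dbsGE {V : Type*} [Fintype V] [DecidableEq V]
    (E : V → V → Prop) [DecidableRel E] (a b : V) : Prop :=
  (∀ i : ℕ, 1 ≤ i → Dis E i a = Dis E i b) ∨
    ∃ k : ℕ, 1 ≤ k ∧ Dis E k a > Dis E k b ∧
      ∀ j : ℕ, 1 ≤ j → j < k → Dis E j a = Dis E j b

section Aux
variable {V : Type*} [Fintype V] [DecidableEq V] (E : V → V → Prop) [DecidableRel E]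

lemma walkCount_zero (v : V) : walkCount E 0 v = 1 := by
  unfold walkCount
  rw [Fintype.card_eq_one_iff]
  refine ⟨⟨fun _ => v, fun j => j.elim0, rfl⟩, ?_⟩
  rintro ⟨f, hf, hv⟩
  ext j
  rw [Fin.eq_zero j]
  exact hv

lemma walkCount_succ (i : ℕ) (v : V) :
    walkCount E (i + 1) v = ∑ u : V, if E u v then walkCount E i u else 0 := by
  classical
  have e : {f : Fin (i + 1 + 1) → V //
      (∀ j : Fin (i+1), E (f j.castSucc) (f j.succ)) ∧ f (Fin.last (i+1)) = v} ≃
      Σ u : {u : V // E u v}, {g : Fin (i + 1) → V //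
      (∀ j : Fin i, E (g j.castSucc) (g j.succ)) ∧ g (Fin.last i) = u.1} := by
    refine
    { toFun := fun f => ⟨⟨f.1 (Fin.last i).castSucc, ?_⟩,
        ⟨f.1 ∘ Fin.castSucc, fun j => ?_, rfl⟩⟩
      invFun := fun p => ⟨Fin.snoc p.2.1 v, ?_, ?_⟩
      left_inv := ?_
      right_inv := ?_ }
    · have := f.2.1 (Fin.last i)
      rwa [Fin.succ_last, f.2.2] at this
    · have := f.2.1 j.castSucc
      simpa [Fin.succ_castSucc, -Fin.castSucc_succ] using this
    · intro j
      refine Fin.lastCases ?_ (fun j => ?_) j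
      · simpa [Fin.snoc_last, Fin.succ_last, p.2.2.2] using p.1.2
      · have := p.2.2.1 j
        simpa [Fin.succ_castSucc, -Fin.castSucc_succ, Fin.snoc_castSucc] using this
    · simp [Fin.snoc_last]
    · rintro ⟨f, hf, hv⟩
      ext j
      simp only
      refine Fin.lastCases ?_ (fun j => ?_) j
      · simp [Fin.snoc_last, hv]
      · simp [Fin.snoc_castSucc]
    · rintro ⟨⟨u, hu⟩, g, hg, hgu⟩
      refine Sigma.ext ?_ ?_
      · simp [Fin.snoc_last, hgu]
      · rw [Subtype.heq_iff_coe_eq]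
        · simp [Fin.snoc_castSucc]
        · intro g'
          simp [Fin.snoc_last, hgu]
  rw [walkCount, Fintype.card_congr e, Fintype.card_sigma, ← Finset.sum_filter]
  exact (Finset.sum_subtype _ (by simp) fun u => walkCount E i u).symm

/-- The integer adjacency matrix of the relation `E`. -/
def adjM : Matrix V V ℤ := Matrix.of fun x y => if E x y then 1 else 0

lemma walkCount_mat (i : ℕ) (v : V) :
    (walkCount E i v : ℤ) = ∑ x : V, (adjM E ^ i) x v := by
  induction i generalizing v with
  | zero => simp [walkCount_zero, Matrix.one_apply]
  | succ i ih =>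
    rw [walkCount_succ, pow_succ]
    push_cast
    simp only [Matrix.mul_apply]
    rw [Finset.sum_comm]
    refine Finset.sum_congr rfl fun u _ => ?_
    rw [← Finset.sum_mul, ← ih, adjM]
    by_cases h : E u v <;> simp [h]

lemma pow_card_eq (M : Matrix V V ℤ) [Nonempty V] :
    M ^ Fintype.card V =
      ∑ j ∈ Finset.range (Fintype.card V), (-(M.charpoly.coeff j)) • M ^ j := by
  have h := M.aeval_self_charpoly
  rw [Polynomial.aeval_eq_sum_range] at h
  have hd : M.charpoly.natDegree = Fintype.card V := M.charpoly_natDegree_eq_dim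
  have hc : M.charpoly.coeff (Fintype.card V) = 1 := by
    rw [← hd]; exact M.charpoly_monic.coeff_natDegree
  rw [hd, Finset.sum_range_succ, hc, one_smul] at h
  have := eq_neg_of_add_eq_zero_right h
  rw [this, ← Finset.sum_neg_distrib]
  exact Finset.sum_congr rfl fun j _ => (neg_smul _ _).symm

lemma key_rec (M : Matrix V V ℤ) (a b : V)
    (h0 : ∀ i : ℕ, 1 ≤ i → i ≤ Fintype.card V →
      (∑ x : V, ((M ^ i) x a - (M ^ i) x b)) = 0) :
    ∀ k : ℕ, 1 ≤ k → (∑ x : V, ((M ^ k) x a - (M ^ k) x b)) = 0 := by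
  have : Nonempty V := ⟨a⟩
  intro k
  induction k using Nat.strong_induction_on with
  | _ k ih =>
    intro hk
    rcases le_or_gt k (Fintype.card V) with hle | hgt
    · exact h0 k hk hle
    · set n := Fintype.card V with hn
      have hk' : k = (k - n) + n := by omega
      rw [hk', pow_add, pow_card_eq]
      have expand : ∀ y x : V,
          (M ^ (k - n) * ∑ j ∈ Finset.range n, (-(M.charpoly.coeff j)) • M ^ j) x y
          = ∑ j ∈ Finset.range n, (-(M.charpoly.coeff j)) * (M ^ (k - n + j)) x y := by
        intro y x
        rw [Finset.mul_sum, Matrix.sum_apply]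
        refine Finset.sum_congr rfl fun j _ => ?_
        rw [Matrix.mul_smul, ← pow_add, Matrix.smul_apply, smul_eq_mul]
      simp only [← hn, expand]
      simp only [← Finset.sum_sub_distrib, ← mul_sub]
      rw [Finset.sum_comm]
      refine Finset.sum_eq_zero fun j hj => ?_
      have hj' : j < n := Finset.mem_range.mp hj
      rw [← Finset.mul_sum, ih (k - n + j) (by omega) (by omega), mul_zero]

lemma dis_eq_iff (i : ℕ) (x y : V) :
    Dis E i x = Dis E i y ↔ walkCount E i x = walkCount E i y := by
  unfold Dis
  by_cases h : Odd i <;> simp [h]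

end Aux

theorem stmt13 {V : Type*} [Fintype V] [DecidableEq V]
    (R : V → V → Prop) [DecidableRel R] (a b : V)
    (h : ¬ ∀ i : ℕ, 1 ≤ i → Dis R i a = Dis R i b) :
    ∃ i : ℕ, 1 ≤ i ∧ i ≤ 2 * Fintype.card V - 1 ∧ Dis R i a ≠ Dis R i b := by
  classical
  by_contra hc
  push_neg at hc
  apply h
  have hcard : 1 ≤ Fintype.card V := Fintype.card_pos_iff.mpr ⟨a⟩
  have h0 : ∀ i : ℕ, 1 ≤ i → i ≤ Fintype.card V →
      (∑ x : V, ((adjM R ^ i) x a - (adjM R ^ i) x b)) = 0 := by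
    intro i h1 h2
    have := (dis_eq_iff R i a b).mp (hc i h1 (by omega))
    rw [Finset.sum_sub_distrib, ← walkCount_mat, ← walkCount_mat, this, sub_self]
  intro i h1
  rw [dis_eq_iff]
  have := key_rec (adjM R) a b h0 i h1
  rw [Finset.sum_sub_distrib, ← walkCount_mat, ← walkCount_mat, sub_eq_zero] at this
  exact_mod_cast this
end

section
/- Let M ∈ ℚ^{n×n}, let α ∈ ℚ^{1×n}, and let η, η' ∈ ℚ^{n×1}. If α · M^i · (η − η') = 0 for all 0 ≤ i ≤ n − 1, then for all i ∈ ℕ₀ we have α · M^i · η = α · M^i · η'. -/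
theorem stmt17 (n : ℕ) (M : Matrix (Fin n) (Fin n) ℚ)
    (α : Matrix (Fin 1) (Fin n) ℚ) (η η' : Matrix (Fin n) (Fin 1) ℚ)
    (h : ∀ i : ℕ, i ≤ n - 1 → α * M ^ i * (η - η') = 0) :
    ∀ i : ℕ, α * M ^ i * η = α * M ^ i * η' := by
  rcases Nat.eq_zero_or_pos n with hn | hn
  · subst hn
    intro i
    ext a b
    simp [Matrix.mul_apply, Finset.sum_fin_eq_sum_range]
  · set d := η - η' with hd
    have key : ∀ i : ℕ, α * M ^ i * d = 0 := by
      intro i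
      induction i using Nat.strong_induction_on with
      | _ i ih =>
        rcases le_or_gt i (n - 1) with hi | hi
        · exact h i hi
        · have hin : n ≤ i := by omega
          have hch := M.aeval_self_charpoly
          have hc : M.charpoly.coeff n = 1 := by
            have := M.charpoly_monic.coeff_natDegree
            rwa [M.charpoly_natDegree_eq_dim, Fintype.card_fin] at this
          rw [Polynomial.aeval_eq_sum_range, M.charpoly_natDegree_eq_dim,
            Fintype.card_fin, Finset.sum_range_succ, hc, one_smul] at hch
          have hMn : M ^ n = -∑ k ∈ Finset.range n, M.charpoly.coeff k • M ^ k := by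
            rw [eq_neg_iff_add_eq_zero]; linear_combination (norm := abel) hch
          have : M ^ i = M ^ (i - n) * M ^ n := by
            rw [← pow_add]; congr 1; omega
          rw [this, hMn]
          rw [Matrix.mul_neg, Matrix.mul_neg, Matrix.neg_mul, neg_eq_zero, Finset.mul_sum, Matrix.mul_sum, Matrix.sum_mul]
          apply Finset.sum_eq_zero
          intro k hk
          simp only [Finset.mem_range] at hk
          have h1 : M ^ (i - n) * (M.charpoly.coeff k • M ^ k) =
              M.charpoly.coeff k • (M ^ (i - n + k)) := by
            rw [Matrix.mul_smul, ← pow_add]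
          rw [h1, Matrix.mul_smul, Matrix.smul_mul,
            ih (i - n + k) (by omega), smul_zero]
    intro i
    have := key i
    rw [hd, Matrix.mul_sub, sub_eq_zero] at this
    exact this
end
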